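/- For all real t with 0 < t ≤ 1/2, one has arcsin(t) - t ≤ (1/8)(arcsin(2t) - 2t). -/

import Mathlib

open Real Set

private lemma f_deriv_nonneg (x : ℝ) (hx0 : 0 < x) (hx1 : x < 1/2) :
    0 ≤ 1 / Real.sqrt (1 - (2*x)^2) * 2 - 2 - 8 * (1 / Real.sqrt (1 - x^2) - 1) := by
  set a := Real.sqrt (1 - (2*x)^2) with ha_def
  set b := Real.sqrt (1 - x^2) with hb_def
  have h2x : (2*x)^2 < 1 := by nlinarith
  have hx2 : x^2 < 1 := by nlinarith
  have ha : 0 < a := Real.sqrt_pos.mpr (by linarith)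
  have hb : 0 < b := Real.sqrt_pos.mpr (by linarith)
  have ha2 : a^2 = 1 - (2*x)^2 := Real.sq_sqrt (by linarith)
  have hb2 : b^2 = 1 - x^2 := Real.sq_sqrt (by linarith)
  have ha1 : a ≤ 1 := by nlinarith
  have hb1 : b ≤ 1 := by nlinarith
  -- key: b*(1+3*a) ≥ 4*a
  have hsq : (b*(1+3*a))^2 - (4*a)^2 ≥ 0 := by nlinarith [sq_nonneg (a-1), sq_nonneg a, mul_pos ha hb]
  have hkey : 4*a ≤ b*(1+3*a) := by nlinarith [mul_pos ha hb]
  have h8 : 8 / b ≤ 2 / a + 6 := by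
    rw [div_le_iff₀ hb, add_mul, div_mul_eq_mul_div, ← sub_le_iff_le_add, le_div_iff₀ ha]
    nlinarith
  have e1 : 1 / a * 2 = 2 / a := by ring
  have e2 : 8 * (1 / b - 1) = 8 / b - 8 := by ring
  linarith [h8, e1 ▸ (le_refl (1/a*2))]

theorem arcsin_sub_le_eighth_arcsin_double (t : ℝ) (ht0 : 0 < t) (ht1 : t ≤ 1/2) :
    Real.arcsin t - t ≤ (1/8) * (Real.arcsin (2*t) - 2*t) := by
  set f : ℝ → ℝ := fun x => Real.arcsin (2*x) - 2*x - 8 * (Real.arcsin x - x) with hf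
  have hcont : ContinuousOn f (Icc 0 (1/2)) := by
    apply Continuous.continuousOn
    continuity
  have hderiv : ∀ x ∈ Set.Ioo (0:ℝ) (1/2), HasDerivAt f
      (1 / Real.sqrt (1 - (2*x)^2) * 2 - 2 - 8 * (1 / Real.sqrt (1 - x^2) - 1)) x := by
    intro x hx
    obtain ⟨hx0, hx1⟩ := hx
    have h2xne1 : 2*x ≠ 1 := by intro h; nlinarith
    have h2xnem1 : 2*x ≠ -1 := by intro h; nlinarith
    have hxne1 : x ≠ 1 := by intro h; nlinarith
    have hxnem1 : x ≠ -1 := by intro h; nlinarith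
    have h1 : HasDerivAt (fun y : ℝ => Real.arcsin (2*y)) (1 / Real.sqrt (1 - (2*x)^2) * 2) x := by
      have := (Real.hasDerivAt_arcsin h2xnem1 h2xne1).comp x
        ((hasDerivAt_id x).const_mul 2)
      simpa [Function.comp_def] using this
    have harc : HasDerivAt Real.arcsin (1 / Real.sqrt (1 - x^2)) x :=
      Real.hasDerivAt_arcsin hxnem1 hxne1
    have h3 : HasDerivAt (fun y : ℝ => 2*y) 2 x := by
      simpa using (hasDerivAt_id x).const_mul 2
    exact ((h1.sub h3).sub (((harc.sub (hasDerivAt_id x)).const_mul 8)))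
  have hmono : MonotoneOn f (Icc 0 (1/2)) := by
    apply monotoneOn_of_deriv_nonneg (convex_Icc _ _) hcont
    · intro x hx
      rw [interior_Icc] at hx
      exact (hderiv x hx).differentiableAt.differentiableWithinAt
    · intro x hx
      rw [interior_Icc] at hx
      rw [(hderiv x hx).deriv]
      exact f_deriv_nonneg x hx.1 hx.2
  have h0 : f 0 = 0 := by simp [hf]
  have ht : f 0 ≤ f t := hmono ⟨le_refl 0, by norm_num⟩ ⟨le_of_lt ht0, ht1⟩ (le_of_lt ht0)
  rw [h0] at ht
  simp only [hf] at ht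
  linarith
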